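/- arXiv:2601.09390 — 2 statements merged into one kernel-verified Lean document; each statement's English description precedes it below -/
import Mathlib

section
/- The polynomial f = 1 + X_1X_2X_3 + X_1X_2²X_3² + X_1²X_2X_3² + X_1²X_2²X_3 is a codeword of weight 5 in A(3, {0,1,3}); that is, f(α^{j_1},α^{j_2},α^{j_3}) = 0 for all j ∈ (Z/3)³ with wt(j) = 2. Consequently the minimum distance of BiD^⊥(3,2,2) is exactly 5. -/
open Finset

abbrev F4 := GaloisField 2 2

noncomputable def toF4 : ZMod 2 →+* F4 := ZMod.castHom dvd_rfl F4

def dotp {m : ℕ} (i j : Fin m → ZMod 3) : ZMod 3 := ∑ l, i l * j l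

noncomputable def dft {m : ℕ} (α : F4) (f : (Fin m → ZMod 3) → ZMod 2)
    (j : Fin m → ZMod 3) : F4 :=
  ∑ i : Fin m → ZMod 3, toF4 (f i) * α ^ (dotp i j).val

noncomputable def code (m : ℕ) (α : F4) (W : Set ℕ) :
    Set ((Fin m → ZMod 3) → ZMod 2) :=
  {f | ∀ j : Fin m → ZMod 3, hammingNorm j ∉ W → dft α f j = 0}

/- ## Auxiliary machinery -/

def cc (v : ZMod 3) : ZMod 2 × ZMod 2 := if v = 0 then (1,0) else if v = 1 then (0,1) else (1,1)

lemma expand (α : F4) (hα : α ^ 2 = α + 1) (v : ZMod 3) :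
    α ^ v.val = toF4 (cc v).1 + toF4 (cc v).2 * α := by
  have h0 : (0 : ZMod 3).val = 0 := rfl
  have h1 : (1 : ZMod 3).val = 1 := rfl
  have h2 : (2 : ZMod 3).val = 2 := rfl
  rcases (by decide : ∀ w : ZMod 3, w = 0 ∨ w = 1 ∨ w = 2) v with h|h|h <;> subst h
  · rw [(by decide : cc 0 = (1,0)), h0]; simp [toF4]
  · rw [(by decide : cc 1 = (0,1)), h1]; simp [toF4]
  · rw [(by decide : cc 2 = (1,1)), h2, hα]; simp [toF4]; ring

lemma alpha_ne (α : F4) (hα : α ^ 2 = α + 1) : α ≠ 0 ∧ α ≠ -1 := by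
  constructor
  · intro h; rw [h] at hα; simp at hα
  · intro h; rw [h] at hα; norm_num at hα

lemma indep (α : F4) (hα : α ^ 2 = α + 1) (a b : ZMod 2)
    (h : toF4 a + toF4 b * α = 0) : a = 0 ∧ b = 0 := by
  obtain ⟨hne0, hne1⟩ := alpha_ne α hα
  rcases (by decide : ∀ w : ZMod 2, w = 0 ∨ w = 1) a with rfl|rfl <;>
    rcases (by decide : ∀ w : ZMod 2, w = 0 ∨ w = 1) b with rfl|rfl <;> simp_all [toF4]
  all_goals first
    | exact hne0 h
    | exact hne1 (by linear_combination h)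

lemma dft_eq {m : ℕ} (α : F4) (hα : α ^ 2 = α + 1) (g : (Fin m → ZMod 3) → ZMod 2)
    (j : Fin m → ZMod 3) :
    dft α g j = toF4 (∑ i : Fin m → ZMod 3, g i * (cc (dotp i j)).1)
      + toF4 (∑ i : Fin m → ZMod 3, g i * (cc (dotp i j)).2) * α := by
  unfold dft
  rw [map_sum, map_sum, Finset.sum_mul, ← Finset.sum_add_distrib]
  refine Finset.sum_congr rfl fun i _ => ?_
  rw [expand α hα (dotp i j), map_mul, map_mul]
  ring

/- ## Index coding and mask tables -/

def idxN (n : ℕ) : Fin 3 → ZMod 3 := ![(↑(n / 9) : ZMod 3), ↑(n / 3 % 3), ↑(n % 3)]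

def idxF (n : Fin 27) : Fin 3 → ZMod 3 := idxN n.val

def dec (v : Fin 3 → ZMod 3) : Fin 27 :=
  ⟨(v 0).val * 9 + (v 1).val * 3 + (v 2).val, by
    have h0 := (v 0).val_lt; have h1 := (v 1).val_lt; have h2 := (v 2).val_lt; omega⟩

lemma idx_dec : ∀ v : Fin 3 → ZMod 3, idxF (dec v) = v := by decide

lemma dec_inj : Function.Injective dec := fun v w h => by
  rw [← idx_dec v, ← idx_dec w, h]

lemma idxF_inj : Function.Injective idxF := by
  intro m n h
  revert h
  revert m n
  decide

def maskL : List ℕ := [5592405, 6184686, 5987259, 15066618, 15658647, 15461229, 11908527, 12500601, 12303318, 16755285, 16361454, 16166331, 10451706, 10057623, 9862509, 7330479, 6936441, 6741462, 11206485, 11008494, 11400891, 8036346, 7838103, 8230509, 14315439, 14117241, 14509782]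

def maskN (n : ℕ) : ℕ := maskL.getD n 0

def Jlist : List (Fin 3 → ZMod 3) :=
  [![0,1,1], ![0,1,2], ![0,2,1], ![0,2,2], ![1,0,1], ![1,0,2],
   ![1,1,0], ![1,2,0], ![2,0,1], ![2,0,2], ![2,1,0], ![2,2,0]]

def jj (p : ℕ) : Fin 3 → ZMod 3 := Jlist.getD (p / 2) (fun _ => 0)

def bspec (n p : ℕ) : Bool :=
  if p % 2 = 0 then decide ((cc (dotp (idxN n) (jj p))).1 = 1)
  else decide ((cc (dotp (idxN n) (jj p))).2 = 1)

lemma Jwt : ∀ p < 24, hammingNorm (jj p) = 2 := by decide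

lemma maskSpec : ∀ n < 27, ∀ p < 24, Nat.testBit (maskN n) p = bspec n p := by decide

lemma maskLt : ∀ n < 27, maskN n < 2 ^ 24 := by decide

set_option maxHeartbeats 10000000 in
lemma core1 : ∀ a < 27, maskN a ≠ 0 := by decide

set_option maxHeartbeats 10000000 in
lemma core2 : ∀ b < 27, ∀ a < b, maskN a ^^^ maskN b ≠ 0 := by decide

set_option maxHeartbeats 10000000 in
lemma core3 : ∀ c < 27, ∀ b < c, ∀ a < b, maskN a ^^^ maskN b ^^^ maskN c ≠ 0 := by decide

set_option maxHeartbeats 10000000 in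
lemma core4 : ∀ d < 27, ∀ c < d, ∀ b < c, ∀ a < b,
    maskN a ^^^ maskN b ^^^ maskN c ^^^ maskN d ≠ 0 := by decide

/- ## ZMod-2 / Bool bridging -/

lemma z1 : ∀ w : ZMod 2, w = 0 →
    decide (w = 1) = false := by decide

lemma z2 : ∀ w x : ZMod 2, w + x = 0 →
    (decide (w = 1) ^^ decide (x = 1)) = false := by decide

lemma z3 : ∀ w x y : ZMod 2, w + (x + y) = 0 →
    ((decide (w = 1) ^^ decide (x = 1)) ^^ decide (y = 1)) = false := by decide

lemma z4 : ∀ w x y z : ZMod 2, w + (x + (y + z)) = 0 →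
    (((decide (w = 1) ^^ decide (x = 1)) ^^ decide (y = 1)) ^^ decide (z = 1)) = false := by decide

lemma highbit (a : Fin 27) {p : ℕ} (hp : ¬ p < 24) : Nat.testBit (maskN a.val) p = false :=
  Nat.testBit_lt_two_pow (lt_of_lt_of_le (maskLt a.val a.isLt)
    (Nat.pow_le_pow_right (by norm_num) (by omega)))

lemma lowbit (a : Fin 27) {p : ℕ} (hp : p < 24) :
    Nat.testBit (maskN a.val) p = bspec a.val p :=
  maskSpec a.val a.isLt p hp

/- ## The four no-low-weight-codeword lemmas -/

lemma no4 (a b c d : Fin 27) (h1 : a < b) (h2 : b < c) (h3 : c < d)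
    (H : ∀ j : Fin 3 → ZMod 3, hammingNorm j = 2 →
      ((cc (dotp (idxF a) j)).1 + ((cc (dotp (idxF b) j)).1 +
        ((cc (dotp (idxF c) j)).1 + (cc (dotp (idxF d) j)).1)) = 0) ∧
      ((cc (dotp (idxF a) j)).2 + ((cc (dotp (idxF b) j)).2 +
        ((cc (dotp (idxF c) j)).2 + (cc (dotp (idxF d) j)).2)) = 0)) : False := by
  apply core4 d.val d.isLt c.val h3 b.val h2 a.val h1
  apply Nat.eq_of_testBit_eq
  intro p
  rw [Nat.zero_testBit, Nat.testBit_xor, Nat.testBit_xor, Nat.testBit_xor]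
  by_cases hp : p < 24
  · rw [lowbit a hp, lowbit b hp, lowbit c hp, lowbit d hp]
    obtain ⟨H1, H2⟩ := H (jj p) (Jwt p hp)
    rcases Nat.mod_two_eq_zero_or_one p with h|h <;>
      simp only [bspec, h, if_pos, if_neg, reduceIte]
    · exact z4 _ _ _ _ H1
    · exact z4 _ _ _ _ H2
  · rw [highbit a hp, highbit b hp, highbit c hp, highbit d hp]; rfl

lemma no3 (a b c : Fin 27) (h1 : a < b) (h2 : b < c)
    (H : ∀ j : Fin 3 → ZMod 3, hammingNorm j = 2 →
      ((cc (dotp (idxF a) j)).1 + ((cc (dotp (idxF b) j)).1 + (cc (dotp (idxF c) j)).1) = 0) ∧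
      ((cc (dotp (idxF a) j)).2 + ((cc (dotp (idxF b) j)).2 + (cc (dotp (idxF c) j)).2) = 0)) :
    False := by
  apply core3 c.val c.isLt b.val h2 a.val h1
  apply Nat.eq_of_testBit_eq
  intro p
  rw [Nat.zero_testBit, Nat.testBit_xor, Nat.testBit_xor]
  by_cases hp : p < 24
  · rw [lowbit a hp, lowbit b hp, lowbit c hp]
    obtain ⟨H1, H2⟩ := H (jj p) (Jwt p hp)
    rcases Nat.mod_two_eq_zero_or_one p with h|h <;>
      simp only [bspec, h, if_pos, if_neg, reduceIte]
    · exact z3 _ _ _ H1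
    · exact z3 _ _ _ H2
  · rw [highbit a hp, highbit b hp, highbit c hp]; rfl

lemma no2 (a b : Fin 27) (h1 : a < b)
    (H : ∀ j : Fin 3 → ZMod 3, hammingNorm j = 2 →
      ((cc (dotp (idxF a) j)).1 + (cc (dotp (idxF b) j)).1 = 0) ∧
      ((cc (dotp (idxF a) j)).2 + (cc (dotp (idxF b) j)).2 = 0)) : False := by
  apply core2 b.val b.isLt a.val h1
  apply Nat.eq_of_testBit_eq
  intro p
  rw [Nat.zero_testBit, Nat.testBit_xor]
  by_cases hp : p < 24
  · rw [lowbit a hp, lowbit b hp]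
    obtain ⟨H1, H2⟩ := H (jj p) (Jwt p hp)
    rcases Nat.mod_two_eq_zero_or_one p with h|h <;>
      simp only [bspec, h, if_pos, if_neg, reduceIte]
    · exact z2 _ _ H1
    · exact z2 _ _ H2
  · rw [highbit a hp, highbit b hp]; rfl

lemma no1 (a : Fin 27)
    (H : ∀ j : Fin 3 → ZMod 3, hammingNorm j = 2 →
      ((cc (dotp (idxF a) j)).1 = 0) ∧ ((cc (dotp (idxF a) j)).2 = 0)) : False := by
  apply core1 a.val a.isLt
  apply Nat.eq_of_testBit_eq
  intro p
  rw [Nat.zero_testBit]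
  by_cases hp : p < 24
  · rw [lowbit a hp]
    obtain ⟨H1, H2⟩ := H (jj p) (Jwt p hp)
    rcases Nat.mod_two_eq_zero_or_one p with h|h <;>
      simp only [bspec, h, if_pos, if_neg, reduceIte]
    · exact z1 _ H1
    · exact z1 _ H2
  · exact highbit a hp

/- ## Part 2 decidable core -/

set_option maxHeartbeats 4000000 in
lemma part2core : ∀ j : Fin 3 → ZMod 3, hammingNorm j = 2 →
    (∑ i : Fin 3 → ZMod 3, (fun i =>
      if i = ![0, 0, 0] ∨ i = ![1, 1, 1] ∨ i = ![1, 2, 2] ∨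
          i = ![2, 1, 2] ∨ i = ![2, 2, 1] then (1 : ZMod 2) else 0) i * (cc (dotp i j)).1 = 0) ∧
    (∑ i : Fin 3 → ZMod 3, (fun i =>
      if i = ![0, 0, 0] ∨ i = ![1, 1, 1] ∨ i = ![1, 2, 2] ∨
          i = ![2, 1, 2] ∨ i = ![2, 2, 1] then (1 : ZMod 2) else 0) i * (cc (dotp i j)).2 = 0) := by
  decide

lemma nm (x y : Fin 27) (h : x < y) : idxF x ≠ idxF y := fun e => absurd (idxF_inj e) h.ne

/-- `f = 1 + X₁X₂X₃ + X₁X₂²X₃² + X₁²X₂X₃² + X₁²X₂²X₃` is a weight-5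
codeword of `A(3,{0,1,3})`, and the minimum distance of `BiD^⊥(3,2,2)` is exactly 5. -/
theorem stmt_13 (α : F4) (hα : α ^ 2 = α + 1)
    (f : (Fin 3 → ZMod 3) → ZMod 2)
    (hfdef : f = fun i =>
      if i = ![0, 0, 0] ∨ i = ![1, 1, 1] ∨ i = ![1, 2, 2] ∨
          i = ![2, 1, 2] ∨ i = ![2, 2, 1] then 1 else 0) :
    hammingNorm f = 5 ∧
    (∀ j : Fin 3 → ZMod 3, hammingNorm j = 2 → dft α f j = 0) ∧
    (∀ g ∈ code 3 α {n | n ≤ 3 ∧ n ≠ 2}, g ≠ 0 → 5 ≤ hammingNorm g) := by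
  subst hfdef
  refine ⟨by decide, ?_, ?_⟩
  · intro j hj
    rw [dft_eq α hα]
    obtain ⟨e1, e2⟩ := part2core j hj
    rw [e1, e2, map_zero, zero_mul, add_zero]
  · intro g hg hne
    simp only [code, Set.mem_setOf_eq] at hg
    by_contra hlt
    push_neg at hlt
    classical
    set S : Finset (Fin 3 → ZMod 3) := Finset.univ.filter (fun i => g i ≠ 0) with hSdef
    have hS : hammingNorm g = S.card := rfl
    have hSne : S.Nonempty := by
      obtain ⟨i0, hi0⟩ := Function.ne_iff.mp hne
      exact ⟨i0, by simp [hSdef]; simpa using hi0⟩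
    have sum_supp : ∀ x : (Fin 3 → ZMod 3) → ZMod 2,
        ∑ i ∈ S, x i = ∑ i : Fin 3 → ZMod 3, g i * x i := by
      intro x
      rw [hSdef, Finset.sum_filter]
      exact Finset.sum_congr rfl fun i _ =>
        ((by decide : ∀ a y : ZMod 2, (if a ≠ 0 then y else 0) = a * y) _ _)
    have Hj : ∀ j, hammingNorm j = 2 →
        (∑ i ∈ S, (cc (dotp i j)).1 = 0) ∧ (∑ i ∈ S, (cc (dotp i j)).2 = 0) := by
      intro j hj2
      have hd := hg j (by rw [hj2]; simp)
      rw [dft_eq α hα] at hd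
      obtain ⟨e1, e2⟩ := indep α hα _ _ hd
      exact ⟨by rw [sum_supp]; exact e1, by rw [sum_supp]; exact e2⟩
    have hST : S = (S.image dec).image idxF := by
      rw [Finset.image_image, show idxF ∘ dec = id from funext idx_dec, Finset.image_id]
    set T := S.image dec with hTdef
    have hTcard : T.card = S.card := Finset.card_image_of_injective S dec_inj
    have hsort := (Finset.sortedLT_sort T).pairwise
    have hlen : (T.sort (· ≤ ·)).length = T.card := Finset.length_sort _
    have hTF := Finset.sort_toFinset (r := (· ≤ ·)) (s := T)
    have hcard_le : S.card ≤ 4 := by omega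
    have hcard_ge : 1 ≤ S.card := Finset.card_pos.mpr hSne
    obtain ⟨L, hLl⟩ : ∃ L, T.sort (· ≤ ·) = L := ⟨_, rfl⟩
    rw [hLl] at hsort hlen hTF
    rcases L with _ | ⟨a, _ | ⟨b, _ | ⟨c, _ | ⟨d, _ | ⟨e, tl⟩⟩⟩⟩⟩
    · simp at hlen; omega
    · simp only [List.toFinset_cons, List.toFinset_nil, insert_empty_eq] at hTF
      have hSeq : S = {idxF a} := by rw [hST, ← hTF]; simp
      refine no1 a fun j hj2 => ?_
      obtain ⟨e1, e2⟩ := Hj j hj2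
      rw [hSeq, Finset.sum_singleton] at e1 e2
      exact ⟨e1, e2⟩
    · simp only [List.toFinset_cons, List.toFinset_nil, insert_empty_eq] at hTF
      rw [List.pairwise_cons] at hsort
      obtain ⟨ha, -⟩ := hsort
      have hab := ha b (by simp)
      have hSeq : S = insert (idxF a) {idxF b} := by rw [hST, ← hTF]; simp
      refine no2 a b hab fun j hj2 => ?_
      obtain ⟨e1, e2⟩ := Hj j hj2
      rw [hSeq, Finset.sum_insert (by simp [nm a b hab]), Finset.sum_singleton] at e1 e2
      exact ⟨e1, e2⟩
    · simp only [List.toFinset_cons, List.toFinset_nil, insert_empty_eq] at hTF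
      rw [List.pairwise_cons, List.pairwise_cons] at hsort
      obtain ⟨ha, hb, -⟩ := hsort
      have hab := ha b (by simp); have hac := ha c (by simp)
      have hbc := hb c (by simp)
      have hSeq : S = insert (idxF a) (insert (idxF b) {idxF c}) := by
        rw [hST, ← hTF]; simp
      refine no3 a b c hab hbc fun j hj2 => ?_
      obtain ⟨e1, e2⟩ := Hj j hj2
      rw [hSeq, Finset.sum_insert (by simp [nm a b hab, nm a c hac]),
        Finset.sum_insert (by simp [nm b c hbc]), Finset.sum_singleton] at e1 e2
      exact ⟨e1, e2⟩
    · simp only [List.toFinset_cons, List.toFinset_nil, insert_empty_eq] at hTF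
      rw [List.pairwise_cons, List.pairwise_cons, List.pairwise_cons] at hsort
      obtain ⟨ha, hb, hc, -⟩ := hsort
      have hab := ha b (by simp); have hac := ha c (by simp); have had := ha d (by simp)
      have hbc := hb c (by simp); have hbd := hb d (by simp)
      have hcd := hc d (by simp)
      have hSeq : S = insert (idxF a) (insert (idxF b) (insert (idxF c) {idxF d})) := by
        rw [hST, ← hTF]; simp
      refine no4 a b c d hab hbc hcd fun j hj2 => ?_
      obtain ⟨e1, e2⟩ := Hj j hj2
      rw [hSeq, Finset.sum_insert (by simp [nm a b hab, nm a c hac, nm a d had]),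
        Finset.sum_insert (by simp [nm b c hbc, nm b d hbd]),
        Finset.sum_insert (by simp [nm c d hcd]), Finset.sum_singleton] at e1 e2
      exact ⟨e1, e2⟩
    · simp at hlen; omega
end

section
/- Projection property: let 1 ≤ ℓ ≤ w, let u, v ∈ (Z/3)^ℓ be distinct, and let f ∈ BiD(m,w,w) = A(m,{w}). Define p ∈ F_2^{3^{m−ℓ}} by p_{i'} = f_{(i',u)} + f_{(i',v)} for all i' ∈ (Z/3)^{m−ℓ}. Then p ∈ BiD(m−ℓ, w−ℓ, w−1) = A(m−ℓ, {w−ℓ,...,w−1}). -/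
open Finset

noncomputable def dft2 {m l : ℕ} (α : F4)
    (f : (Fin m → ZMod 3) × (Fin l → ZMod 3) → ZMod 2)
    (j : (Fin m → ZMod 3) × (Fin l → ZMod 3)) : F4 :=
  ∑ i : (Fin m → ZMod 3) × (Fin l → ZMod 3),
    toF4 (f i) * α ^ (dotp i.1 j.1 + dotp i.2 j.2).val


lemma pow_val_mod (α : F4) (h3 : α ^ 3 = 1) (n : ℕ) : α ^ (n % 3) = α ^ n := by
  conv_rhs => rw [← Nat.div_add_mod n 3]
  rw [pow_add, pow_mul, h3, one_pow, one_mul]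

lemma phi_add (α : F4) (h3 : α ^ 3 = 1) (a b : ZMod 3) :
    α ^ (a + b).val = α ^ a.val * α ^ b.val := by
  rw [ZMod.val_add, pow_val_mod α h3, pow_add]

lemma phi_sum (α : F4) (h3 : α ^ 3 = 1) {ι : Type*} (s : Finset ι) (g : ι → ZMod 3) :
    α ^ (∑ k ∈ s, g k).val = ∏ k ∈ s, α ^ (g k).val := by
  classical
  induction s using Finset.induction_on with
  | empty => simp
  | insert a s h ih =>
      rw [Finset.sum_insert h, phi_add α h3, ih, Finset.prod_insert h]

lemma dotp_sub {m : ℕ} (a b j : Fin m → ZMod 3) :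
    dotp (a - b) j = dotp a j - dotp b j := by
  simp [dotp, sub_mul, Finset.sum_sub_distrib]

lemma orth1 (α : F4) (hα : α ^ 2 = α + 1) (c : ZMod 3) :
    ∑ t : ZMod 3, α ^ (c * t).val = if c = 0 then 1 else 0 := by
  have h2 : (2:F4) = 0 := by exact_mod_cast CharP.cast_eq_zero F4 2
  have hs : ∀ g : ZMod 3 → F4, ∑ t : ZMod 3, g t = g 0 + g 1 + g 2 := by
    intro g; show ∑ t : Fin 3, g t = _; exact Fin.sum_univ_three g
  have hc := (by decide : ∀ c : ZMod 3, c = 0 ∨ c = 1 ∨ c = 2) c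
  rcases hc with rfl | rfl | rfl
  · rw [hs, if_pos rfl]
    simp only [zero_mul, ZMod.val_zero, pow_zero]
    linear_combination h2
  · rw [hs, if_neg (by decide)]
    rw [show ((1:ZMod 3)*0).val = 0 by decide,
        show ((1:ZMod 3)*1).val = 1 by decide,
        show ((1:ZMod 3)*2).val = 2 by decide]
    linear_combination hα + h2 + α*h2
  · rw [hs, if_neg (by decide)]
    rw [show ((2:ZMod 3)*0).val = 0 by decide,
        show ((2:ZMod 3)*1).val = 2 by decide,
        show ((2:ZMod 3)*2).val = 1 by decide]
    linear_combination hα + h2 + α*h2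

lemma orth {l : ℕ} (α : F4) (hα : α ^ 2 = α + 1) (h3 : α ^ 3 = 1) (d : Fin l → ZMod 3) :
    ∑ j : Fin l → ZMod 3, α ^ (dotp d j).val = if d = 0 then 1 else 0 := by
  classical
  have h1 : ∀ j : Fin l → ZMod 3, α ^ (dotp d j).val = ∏ k, α ^ (d k * j k).val :=
    fun j => phi_sum α h3 _ _
  simp_rw [h1]
  have := Finset.prod_univ_sum (fun _ : Fin l => (Finset.univ : Finset (ZMod 3)))
    (fun k t => α ^ (d k * t).val)
  rw [← Fintype.piFinset_univ, ← this]
  simp_rw [orth1 α hα]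
  by_cases hd : d = 0
  · rw [if_pos hd]
    subst hd
    simp
  · rw [if_neg hd]
    obtain ⟨k, hk⟩ := Function.ne_iff.mp hd
    simp only [Pi.zero_apply] at hk
    exact Finset.prod_eq_zero (Finset.mem_univ k) (by simp [hk])


/-- projection property: if `f ∈ BiD(m+ℓ, w, w) = A(m+ℓ, {w})`
(indices split as pairs in `(ZMod 3)^m × (ZMod 3)^ℓ`), `1 ≤ ℓ ≤ w`, and `u ≠ v`,
then `p = (i' ↦ f(i',u) + f(i',v))` lies in
`BiD(m, w-ℓ, w-1) = A(m, {w-ℓ,…,w-1})`. -/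
theorem stmt_17 (m l w : ℕ) (hl : 1 ≤ l) (hlw : l ≤ w)
    (α : F4) (hα : α ^ 2 = α + 1)
    (u v : Fin l → ZMod 3) (huv : u ≠ v)
    (f : (Fin m → ZMod 3) × (Fin l → ZMod 3) → ZMod 2)
    (hf : ∀ j : (Fin m → ZMod 3) × (Fin l → ZMod 3),
      hammingNorm j.1 + hammingNorm j.2 ≠ w → dft2 α f j = 0) :
    (fun i' => f (i', u) + f (i', v)) ∈
      code m α {n | w - l ≤ n ∧ n ≤ w - 1} := by
  classical
  intro j' hj'
  have h2 : (2:F4) = 0 := by exact_mod_cast CharP.cast_eq_zero F4 2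
  have h3 : α ^ 3 = 1 := by linear_combination (α + 1) * hα + α * h2
  have hterm : ∀ (i₂ j₂ : Fin l → ZMod 3),
      (α ^ (-(dotp u j₂)).val + α ^ (-(dotp v j₂)).val) * α ^ (dotp i₂ j₂).val
        = α ^ (dotp (i₂ - u) j₂).val + α ^ (dotp (i₂ - v) j₂).val := by
    intro i₂ j₂
    rw [add_mul, ← phi_add α h3, ← phi_add α h3]
    rw [show -(dotp u j₂) + dotp i₂ j₂ = dotp (i₂ - u) j₂ by rw [dotp_sub]; ring,
        show -(dotp v j₂) + dotp i₂ j₂ = dotp (i₂ - v) j₂ by rw [dotp_sub]; ring]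
  have hsum2 : ∀ i₂ : Fin l → ZMod 3,
      ∑ j₂ : Fin l → ZMod 3,
        (α ^ (-(dotp u j₂)).val + α ^ (-(dotp v j₂)).val) * α ^ (dotp i₂ j₂).val
        = (if i₂ = u then 1 else 0) + (if i₂ = v then 1 else 0) := by
    intro i₂
    simp_rw [hterm]
    rw [Finset.sum_add_distrib, orth α hα h3, orth α hα h3]
    simp only [sub_eq_zero]
  have key : dft α (fun i' => f (i', u) + f (i', v)) j'
      = ∑ j₂ : Fin l → ZMod 3,
          (α ^ (-(dotp u j₂)).val + α ^ (-(dotp v j₂)).val) * dft2 α f (j', j₂) := by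
    unfold dft dft2
    simp only [Finset.mul_sum]
    rw [Finset.sum_comm]
    rw [Fintype.sum_prod_type]
    apply Finset.sum_congr rfl
    intro i₁ _
    have : ∀ i₂ : Fin l → ZMod 3, ∑ j₂ : Fin l → ZMod 3,
        (α ^ (-(dotp u j₂)).val + α ^ (-(dotp v j₂)).val) *
          (toF4 (f (i₁, i₂)) * α ^ (dotp i₁ j' + dotp i₂ j₂).val)
        = toF4 (f (i₁, i₂)) * α ^ (dotp i₁ j').val *
            ((if i₂ = u then 1 else 0) + (if i₂ = v then 1 else 0)) := by
      intro i₂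
      rw [← hsum2 i₂, Finset.mul_sum]
      apply Finset.sum_congr rfl
      intro j₂ _
      rw [phi_add α h3]
      ring
    simp_rw [this]
    rw [map_add]
    simp only [mul_add, mul_ite, mul_one, mul_zero, Finset.sum_add_distrib,
      Finset.sum_ite_eq', Finset.mem_univ, if_true]
    ring
  rw [key]
  apply Finset.sum_eq_zero
  intro j₂ _
  by_cases hw : hammingNorm j' + hammingNorm j₂ = w
  · have hle : hammingNorm j₂ ≤ l := by
      simpa using (hammingNorm_le_card_fintype : hammingNorm j₂ ≤ Fintype.card (Fin l))
    have hz : hammingNorm j₂ = 0 := by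
      simp only [Set.mem_setOf_eq] at hj'
      omega
    have hz' : j₂ = 0 := by
      rwa [hammingNorm_eq_zero] at hz
    subst hz'
    have hu : dotp u 0 = 0 := by simp [dotp]
    have hv : dotp v 0 = 0 := by simp [dotp]
    rw [hu, hv, neg_zero, ZMod.val_zero, pow_zero]
    rw [show (1:F4) + 1 = 2 by ring, h2, zero_mul]
  · rw [hf (j', j₂) hw, mul_zero]
end
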